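/- The leave-one-out weights of the unordered set estimator sum to one: for any size-k subset S^k of D, ∑_{s∈S^k} p(s) R(S^k,s) = 1, where R(S^k,s) = p^{D\{s}}(S^k\{s})/p(S^k). -/

import Mathlib

open Finset MeasureTheory

variable {α : Type*}

/-- Probability of drawing the ordered sample `B` sequentially without replacement
from (unnormalized) weights `p`, when `t` is the total remaining probability mass. -/
noncomputable def ordProb (p : α → ℝ) : ℝ → List α → ℝ
  | _, [] => 1
  | t, b :: L => (p b / t) * ordProb p (t - p b) L

/-- Probability of drawing the unordered sample `S` without replacement:
sum of `ordProb` over all orderings of `S`. -/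
noncomputable def setProb (p : α → ℝ) (t : ℝ) (S : Finset α) : ℝ :=
  (S.toList.permutations.map (ordProb p t)).sum

lemma setProb_eq_sum [DecidableEq α] (p : α → ℝ) (t : ℝ) (S : Finset α) :
    setProb p t S = ∑ m ∈ S.toList.permutations.toFinset, ordProb p t m := by
  rw [setProb, List.sum_toFinset _ (List.nodup_permutations _ S.nodup_toList)]

lemma setProb_rec [DecidableEq α] (p : α → ℝ) (t : ℝ) (S : Finset α) (hS : S.Nonempty) :
    setProb p t S = ∑ s ∈ S, (p s / t) * setProb p (t - p s) (S.erase s) := by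
  have key : ∀ s ∈ S, (p s / t) * setProb p (t - p s) (S.erase s)
      = ∑ m ∈ (S.erase s).toList.permutations.toFinset, ordProb p t (s :: m) := by
    intro s _
    rw [setProb_eq_sum, Finset.mul_sum]
    rfl
  rw [Finset.sum_congr rfl key, setProb_eq_sum]
  conv_rhs => rw [Finset.sum_sigma']
  haveI : Inhabited α := ⟨hS.choose⟩
  refine Finset.sum_nbij' (i := fun m => (⟨m.headI, m.tail⟩ : Σ _ : α, List α))
    (j := fun x => x.1 :: x.2) ?_ ?_ ?_ ?_ ?_
  · intro m hm
    simp only [List.mem_toFinset, List.mem_permutations] at hm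
    have hne : m ≠ [] := by
      intro h
      rw [h] at hm
      exact hS.ne_empty (Finset.toList_eq_nil.mp (List.Perm.nil_eq hm).symm)
    obtain ⟨a, l, rfl⟩ := List.exists_cons_of_ne_nil hne
    have hmem : a ∈ S := by
      have := hm.mem_iff.mp (List.mem_cons_self : a ∈ a :: l)
      rwa [Finset.mem_toList] at this
    simp only [Finset.mem_sigma, List.headI_cons, List.tail_cons, List.mem_toFinset,
      List.mem_permutations]
    refine ⟨hmem, ?_⟩
    rw [← Multiset.coe_eq_coe] at hm ⊢
    rw [Finset.coe_toList] at hm ⊢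
    rw [Finset.erase_val, ← hm, ← Multiset.cons_coe, Multiset.erase_cons_head]
  · rintro ⟨a, m⟩ hx
    simp only [Finset.mem_sigma, List.mem_toFinset, List.mem_permutations] at hx ⊢
    obtain ⟨ha, hm⟩ := hx
    rw [← Multiset.coe_eq_coe] at hm ⊢
    rw [Finset.coe_toList] at hm ⊢
    rw [← Multiset.cons_coe, hm, Finset.erase_val, Multiset.cons_erase (show a ∈ S.val from ha)]
  · intro m hm
    simp only [List.mem_toFinset, List.mem_permutations] at hm
    have hne : m ≠ [] := by
      intro h
      rw [h] at hm
      exact hS.ne_empty (Finset.toList_eq_nil.mp (List.Perm.nil_eq hm).symm)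
    obtain ⟨a, l, rfl⟩ := List.exists_cons_of_ne_nil hne
    rfl
  · rintro ⟨a, m⟩ _; rfl
  · intro m hm
    simp only [List.mem_toFinset, List.mem_permutations] at hm
    have hne : m ≠ [] := by
      intro h
      rw [h] at hm
      exact hS.ne_empty (Finset.toList_eq_nil.mp (List.Perm.nil_eq hm).symm)
    obtain ⟨a, l, rfl⟩ := List.exists_cons_of_ne_nil hne
    rfl

theorem leave_one_out_weights_sum_to_one [DecidableEq α] (D S : Finset α) (hS : S ⊆ D)
    (k : ℕ) (hk1 : 1 ≤ k) (hcard : S.card = k) (hk : k ≤ D.card)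
    (p : α → ℝ) (hp : ∀ x ∈ D, 0 < p x) (hsum : ∑ x ∈ D, p x = 1)
    (hpos : 0 < setProb p 1 S) :
    ∑ s ∈ S, p s * (setProb p (1 - p s) (S.erase s) / setProb p 1 S) = 1 := by
  have hne : S.Nonempty := Finset.card_pos.mp (by omega)
  have hrec := setProb_rec p 1 S hne
  simp only [div_one] at hrec
  have : ∑ s ∈ S, p s * (setProb p (1 - p s) (S.erase s) / setProb p 1 S)
      = (∑ s ∈ S, p s * setProb p (1 - p s) (S.erase s)) / setProb p 1 S := by
    rw [Finset.sum_div]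
    exact Finset.sum_congr rfl fun s _ => (mul_div_assoc _ _ _).symm
  rw [this, ← hrec, div_self hpos.ne']
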